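/- If (S,X,ω) is a compact Hausdorff weighted semitopological transformation semigroup and T = { t ∈ S : tS = S, tX = X } is dense in S, then the restricted action of T on X is jointly continuous, i.e. (T,X,ω) is a topological transformation semigroup. -/

import Mathlib

open Set Function Filter Topology

section Frag

variable {X : Type*} [TopologicalSpace X] [CompactSpace X]

set_option maxHeartbeats 2000000 in
theorem frag_lemma (M : Set (X → ℝ)) (hM : IsCompact M) (hMne : M.Nonempty)
    (hMc : ∀ g ∈ M, Continuous g) {ε : ℝ} (hε : 0 < ε) :
    ∃ G : Set (X → ℝ), IsOpen G ∧ (M ∩ G).Nonempty ∧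
      ∀ g ∈ M ∩ G, ∀ h ∈ M ∩ G, ∀ x, |g x - h x| ≤ ε := by
  classical
  rcases isEmpty_or_nonempty X with hX | hX
  · exact ⟨univ, isOpen_univ, by simpa using hMne, fun g _ h _ x => (IsEmpty.false x).elim⟩
  by_contra hcon
  push_neg at hcon
  have key : ∀ G : Set (X → ℝ), IsOpen G → (M ∩ G).Nonempty →
      ∃ p : (X → ℝ) × (X → ℝ) × X, p.1 ∈ M ∩ G ∧ p.2.1 ∈ M ∩ G ∧
        ε < |p.1 p.2.2 - p.2.1 p.2.2| := by
    intro G hG hne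
    obtain ⟨g, hg, h, hh, x, hx⟩ := hcon G hG hne
    exact ⟨⟨g, h, x⟩, hg, hh, hx⟩
  haveI : Inhabited X := Classical.inhabited_of_nonempty hX
  set wit : Set (X → ℝ) → (X → ℝ) × (X → ℝ) × X := fun G =>
    if h : IsOpen G ∧ (M ∩ G).Nonempty then (key G h.1 h.2).choose else default with hwit
  have hwit_spec : ∀ G, IsOpen G → (M ∩ G).Nonempty →
      (wit G).1 ∈ M ∩ G ∧ (wit G).2.1 ∈ M ∩ G ∧
        ε < |(wit G).1 (wit G).2.2 - (wit G).2.1 (wit G).2.2| := by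
    intro G h1 h2
    have : wit G = (key G h1 h2).choose := by
      rw [hwit]; exact dif_pos ⟨h1, h2⟩
    rw [this]
    exact (key G h1 h2).choose_spec
  set child : Set (X → ℝ) → Bool → Set (X → ℝ) := fun G i =>
    G ∩ ((fun g : X → ℝ => g (wit G).2.2) ⁻¹'
      Metric.ball ((bif i then (wit G).2.1 else (wit G).1) (wit G).2.2) (ε / 4)) with hchild
  have hchild_sub : ∀ G i, child G i ⊆ G := fun G i => inter_subset_left
  have hchild_good : ∀ G, IsOpen G → (M ∩ G).Nonempty →
      ∀ i, IsOpen (child G i) ∧ (M ∩ child G i).Nonempty := by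
    intro G h1 h2 i
    obtain ⟨hg, hh, _⟩ := hwit_spec G h1 h2
    refine ⟨h1.inter ((continuous_apply ((wit G).2.2)).isOpen_preimage _ Metric.isOpen_ball), ?_⟩
    cases i
    · exact ⟨(wit G).1, hg.1, hg.2, Metric.mem_ball_self (by positivity)⟩
    · exact ⟨(wit G).2.1, hh.1, hh.2, Metric.mem_ball_self (by positivity)⟩
  set node : List Bool → Set (X → ℝ) := fun w => w.foldr (fun i G => child G i) univ
    with hnode
  have hnode_cons : ∀ i w, node (i :: w) = child (node w) i := fun i w => rfl
  have hnode_good : ∀ w, IsOpen (node w) ∧ (M ∩ node w).Nonempty := by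
    intro w
    induction w with
    | nil => exact ⟨isOpen_univ, by simpa [hnode] using hMne⟩
    | cons i w ih => rw [hnode_cons]; exact hchild_good _ ih.1 ih.2 i
  have hcent : ∀ w : List Bool, ∃ g, g ∈ M ∩ node w := fun w => (hnode_good w).2
  choose cent hcent_mem using hcent
  set π : X → (List Bool → ℝ) := fun x w => cent w x with hπ
  have hπcont : Continuous π := continuous_pi fun w => hMc _ (hcent_mem w).1
  set Y := Set.range π with hY
  haveI hYcomp : CompactSpace Y := isCompact_iff_compactSpace.mp (isCompact_range hπcont)
  haveI : TopologicalSpace.MetrizableSpace Y := inferInstance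
  letI mY : MetricSpace Y := TopologicalSpace.metrizableSpaceMetric Y
  set π' : X → Y := fun x => ⟨π x, mem_range_self x⟩ with hπ'
  have hπ'cont : Continuous π' := hπcont.subtype_mk _
  have hπ'surj : Surjective π' := by rintro ⟨y, x, rfl⟩; exact ⟨x, rfl⟩
  have hπ'closed : IsClosedMap π' := fun C hC => ((hC.isCompact).image hπ'cont).isClosed
  have hqm : IsQuotientMap π' := hπ'closed.isQuotientMap hπ'cont hπ'surj
  set K := closure (Set.range cent) with hK
  have hKM : K ⊆ M := closure_minimal (range_subset_iff.mpr fun w => (hcent_mem w).1) hM.isClosed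
  have hKcomp : IsCompact K := hM.of_isClosed_subset isClosed_closure hKM
  have wd : ∀ g ∈ K, ∀ x x' : X, π x = π x' → g x = g x' := by
    intro g hg x x' hxx
    by_contra hne
    have hd : 0 < |g x - g x'| := abs_pos.mpr (sub_ne_zero.mpr hne)
    have hUopen : IsOpen {h : X → ℝ | |h x - g x| < |g x - g x'| / 2 ∧
        |h x' - g x'| < |g x - g x'| / 2} := by
      apply IsOpen.inter
      · exact isOpen_lt (((continuous_apply x).sub continuous_const).abs) continuous_const
      · exact isOpen_lt (((continuous_apply x').sub continuous_const).abs) continuous_const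
    have hgU : g ∈ {h : X → ℝ | |h x - g x| < |g x - g x'| / 2 ∧
        |h x' - g x'| < |g x - g x'| / 2} := by
      constructor <;> simp [hd]
    obtain ⟨c, hcU, hcR⟩ := mem_closure_iff.mp hg _ hUopen hgU
    obtain ⟨w, rfl⟩ := hcR
    have hcc : cent w x = cent w x' := congrFun hxx w
    have htri : |g x - g x'| ≤ |g x - cent w x| + |cent w x' - g x'| := by
      have : g x - g x' = (g x - cent w x) + (cent w x' - g x') := by rw [← hcc]; ring
      rw [this]; exact abs_add_le _ _
    have h1 : |g x - cent w x| < |g x - g x'| / 2 := by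
      rw [abs_sub_comm]; exact hcU.1
    linarith [hcU.2]
  have hfac : ∀ g, g ∈ K → ∃ G : Y → ℝ, Continuous G ∧ ∀ x, G (π' x) = g x := by
    intro g hg
    refine ⟨fun y => g (Classical.choose y.2), ?_, ?_⟩
    · rw [hqm.continuous_iff]
      have : (fun y : Y => g (Classical.choose y.2)) ∘ π' = g := by
        funext x
        exact wd g hg _ x (Classical.choose_spec (π' x).2)
      rw [this]
      exact hMc g (hKM hg)
    · intro x
      exact wd g hg _ x (Classical.choose_spec (π' x).2)
  set prefR : (ℕ → Bool) → ℕ → List Bool := fun β n => ((List.range n).reverse).map β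
    with hprefR
  have hprefR_succ : ∀ β n, prefR β (n + 1) = β n :: prefR β n := by
    intro β n
    simp [hprefR, List.range_succ]
  have hchain : ∀ (β : ℕ → Bool) n, M ∩ node (prefR β (n+1)) ⊆ M ∩ node (prefR β n) := by
    intro β n
    apply inter_subset_inter subset_rfl
    rw [hprefR_succ, hnode_cons]
    exact hchild_sub _ _
  have hbranch : ∀ β : ℕ → Bool, ∃ g, g ∈ ⋂ n, K ∩ closure (M ∩ node (prefR β n)) := by
    intro β
    apply IsCompact.nonempty_iInter_of_sequence_nonempty_isCompact_isClosed
    · intro n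
      exact inter_subset_inter subset_rfl (closure_mono (hchain β n))
    · intro n
      exact ⟨cent (prefR β n), subset_closure ⟨_, rfl⟩, subset_closure (hcent_mem _)⟩
    · exact hKcomp.of_isClosed_subset (isClosed_closure.inter isClosed_closure)
        inter_subset_left
    · intro n
      exact isClosed_closure.inter isClosed_closure
  choose gb hgb using hbranch
  have hgbK : ∀ β, gb β ∈ K := fun β => (mem_iInter.mp (hgb β) 0).1
  -- separation of distinct branches
  have hsep : ∀ β β' : ℕ → Bool, β ≠ β' → ∃ x : X, ε / 2 < |gb β x - gb β' x| := by
    intro β β' hne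
    have hex : ∃ n, β n ≠ β' n := by
      by_contra h
      push_neg at h
      exact hne (funext h)
    set n₀ := Nat.find hex with hn₀def
    have hn₀ : β n₀ ≠ β' n₀ := Nat.find_spec hex
    have hagree : ∀ i < n₀, β i = β' i := fun i hi => not_not.mp (Nat.find_min hex hi)
    have hpref_eq : prefR β n₀ = prefR β' n₀ := by
      simp only [hprefR]
      apply List.map_congr_left
      intro a ha
      exact hagree a (List.mem_range.mp (List.mem_reverse.mp ha))
    set w := prefR β n₀ with hwdef
    set xs := (wit (node w)).2.2 with hxs
    have hGood := hnode_good w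
    obtain ⟨hwa, hwb, hwsep⟩ := hwit_spec (node w) hGood.1 hGood.2
    have hclose : ∀ (i : Bool), ∀ g ∈ closure (M ∩ node (i :: w)),
        |g xs - (bif i then (wit (node w)).2.1 else (wit (node w)).1) xs| ≤ ε/4 := by
      intro i g hg
      have hsub : M ∩ node (i :: w) ⊆
          {h : X → ℝ | |h xs - (bif i then (wit (node w)).2.1 else (wit (node w)).1) xs| ≤ ε/4} := by
        intro h hh
        have h2 := (hh.2 : h ∈ child (node w) i).2
        simp only [mem_preimage, Metric.mem_ball, Real.dist_eq] at h2
        exact le_of_lt h2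
      have hcl : IsClosed {h : X → ℝ |
          |h xs - (bif i then (wit (node w)).2.1 else (wit (node w)).1) xs| ≤ ε/4} :=
        isClosed_le (((continuous_apply xs).sub continuous_const).abs) continuous_const
      exact closure_minimal hsub hcl hg
    have h1 : gb β ∈ closure (M ∩ node (β n₀ :: w)) := by
      have h0 := (mem_iInter.mp (hgb β) (n₀+1)).2
      rwa [hprefR_succ] at h0
    have h2 : gb β' ∈ closure (M ∩ node (β' n₀ :: w)) := by
      have h0 := (mem_iInter.mp (hgb β') (n₀+1)).2
      rw [hprefR_succ] at h0
      rwa [← hpref_eq] at h0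
    have hb1 := hclose _ _ h1
    have hb2 := hclose _ _ h2
    refine ⟨xs, ?_⟩
    have arith : ∀ A B a b : ℝ, ε < |a - b| → |A - a| ≤ ε/4 → |B - b| ≤ ε/4 →
        ε/2 < |A - B| := by
      intro A B a b h0 h1 h2
      have t1 : |a - b| ≤ |a - A| + |A - b| := abs_sub_le _ _ _
      have t2 : |A - b| ≤ |A - B| + |B - b| := abs_sub_le _ _ _
      have t3 : |a - A| = |A - a| := abs_sub_comm _ _
      linarith
    cases hc1 : β n₀ <;> cases hc2 : β' n₀
    · rw [hc1, hc2] at hn₀; exact absurd rfl hn₀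
    · rw [hc1] at hb1; rw [hc2] at hb2
      simp only [Bool.cond_false, Bool.cond_true] at hb1 hb2
      exact arith (gb β xs) (gb β' xs) ((wit (node w)).1 xs) ((wit (node w)).2.1 xs) hwsep hb1 hb2
    · rw [hc1] at hb1; rw [hc2] at hb2
      simp only [Bool.cond_false, Bool.cond_true] at hb1 hb2
      exact arith (gb β xs) (gb β' xs) ((wit (node w)).2.1 xs) ((wit (node w)).1 xs)
        (by rwa [abs_sub_comm]) hb1 hb2
    · rw [hc1, hc2] at hn₀; exact absurd rfl hn₀
  have hfac' : ∀ β : ℕ → Bool, ∃ G : Y → ℝ, Continuous G ∧ ∀ x, G (π' x) = gb β x :=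
    fun β => hfac (gb β) (hgbK β)
  choose Gb hGbc hGbx using hfac'
  have hmod : ∀ β : ℕ → Bool, ∃ k : ℕ,
      ∀ y y' : Y, dist y y' < 1/(k+1) → |Gb β y - Gb β y'| < ε/8 := by
    intro β
    have huc : @UniformContinuous _ _ mY.toUniformSpace _ (Gb β) :=
      @CompactSpace.uniformContinuous_of_continuous _ _ mY.toUniformSpace _ _ _ (hGbc β)
    obtain ⟨δ, hδ, hδ'⟩ :=
      (@Metric.uniformContinuous_iff _ _ mY.toPseudoMetricSpace _ _).mp huc (ε/8) (by positivity)
    obtain ⟨k, hk⟩ := exists_nat_one_div_lt hδ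
    refine ⟨k, fun y y' h => ?_⟩
    have h2 := hδ' (lt_trans h hk)
    rwa [Real.dist_eq] at h2
  choose modf hmodf using hmod
  have hnet : ∀ k : ℕ, ∃ t : Finset Y, (univ : Set Y) ⊆ ⋃ y ∈ t, Metric.ball y (1/(k+1)) := by
    intro k
    obtain ⟨t, _, htf, htc⟩ := finite_cover_balls_of_compact (X := Y) (s := univ)
      isCompact_univ (by positivity : (0:ℝ) < 1/(k+1))
    refine ⟨htf.toFinset, ?_⟩
    simpa [Set.Finite.mem_toFinset] using htc
  choose net hnetc using hnet
  set clf : (ℕ → Bool) → ℕ × List ℤ := fun β =>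
    ⟨modf β, (net (modf β)).toList.map (fun y => ⌊ Gb β y / (ε/8) ⌋)⟩ with hclf
  have hpig : ∃ β β' : ℕ → Bool, β ≠ β' ∧ clf β = clf β' := by
    by_contra h
    push_neg at h
    have hinj : Function.Injective clf := by
      intro β β' hEq
      by_contra hne
      exact h β β' hne hEq
    haveI : Countable (ℕ → Bool) := hinj.countable
    obtain ⟨e, he⟩ := exists_surjective_nat (ℕ → Bool)
    obtain ⟨m, hm⟩ := he fun n => !(e n n)
    have hc := congrFun hm m
    simp at hc
  obtain ⟨β, β', hneq, hEq⟩ := hpig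
  have hfst : modf β = modf β' := congrArg Prod.fst hEq
  have hsnd : ∀ c ∈ net (modf β), ⌊ Gb β c / (ε/8) ⌋ = ⌊ Gb β' c / (ε/8) ⌋ := by
    have hl := congrArg Prod.snd hEq
    simp only [hclf] at hl
    rw [← hfst] at hl
    have hmap : ∀ (l : List Y) (f g : Y → ℤ), l.map f = l.map g → ∀ c ∈ l, f c = g c := by
      intro l f g hfg c hc
      induction l with
      | nil => cases hc
      | cons a l ih =>
        simp only [List.map_cons, List.cons.injEq] at hfg
        rcases List.mem_cons.mp hc with rfl | hc'
        · exact hfg.1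
        · exact ih hfg.2 hc'
    intro c hc
    exact hmap _ _ _ hl c (Finset.mem_toList.mpr hc)
  have hflooru : ∀ a b : ℝ, ⌊ a / (ε/8) ⌋ = ⌊ b / (ε/8) ⌋ → |a - b| < ε/8 := by
    intro a b hfl
    have hu : (0:ℝ) < ε/8 := by positivity
    have h4 : a / (ε/8) < ⌊b/(ε/8)⌋ + 1 := by
      rw [← hfl]; exact Int.lt_floor_add_one _
    have h5 : (⌊b/(ε/8)⌋ : ℝ) ≤ a/(ε/8) := by
      rw [← hfl]; exact Int.floor_le _
    have h6 : (⌊b/(ε/8)⌋ : ℝ) ≤ b/(ε/8) := Int.floor_le _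
    have h7 : b / (ε/8) < ⌊b/(ε/8)⌋ + 1 := Int.lt_floor_add_one _
    rw [abs_sub_lt_iff]
    constructor
    · have := (div_lt_iff₀ hu).mp h4
      have := (le_div_iff₀ hu).mp h6
      linarith
    · have := (div_lt_iff₀ hu).mp h7
      have := (le_div_iff₀ hu).mp h5
      linarith
  have hclose_all : ∀ y : Y, |Gb β y - Gb β' y| < ε/2 := by
    intro y
    have hy := hnetc (modf β) (mem_univ y)
    rw [mem_iUnion₂] at hy
    obtain ⟨c, hc, hyc⟩ := hy
    rw [Metric.mem_ball] at hyc
    have h1 : |Gb β y - Gb β c| < ε/8 := hmodf β y c hyc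
    have h2 : |Gb β' y - Gb β' c| < ε/8 := by
      apply hmodf β' y c
      rwa [← hfst]
    have h3 : |Gb β c - Gb β' c| < ε/8 := hflooru _ _ (hsnd c hc)
    have t1 : |Gb β y - Gb β' y| ≤ |Gb β y - Gb β c| + |Gb β c - Gb β' y| := abs_sub_le _ _ _
    have t2 : |Gb β c - Gb β' y| ≤ |Gb β c - Gb β' c| + |Gb β' c - Gb β' y| := abs_sub_le _ _ _
    have t3 : |Gb β' c - Gb β' y| = |Gb β' y - Gb β' c| := abs_sub_comm _ _
    linarith
  obtain ⟨x₀, hx₀⟩ := hsep β β' hneq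
  have hfin := hclose_all (π' x₀)
  rw [hGbx β x₀, hGbx β' x₀] at hfin
  linarith

end Frag

section MainAux
variable {S X : Type*} [TopologicalSpace S] [TopologicalSpace X]

theorem star_lemma [CompactSpace S] [CompactSpace X] [Nonempty S] (act : S → X → X)
    (hacts : ∀ s, Continuous (act s)) (hactx : ∀ x, Continuous fun s => act s x)
    (f : X → ℝ) (hf : Continuous f) {ε : ℝ} (hε : 0 < ε) :
    ∃ U : Set S, IsOpen U ∧ U.Nonempty ∧
      ∀ s ∈ U, ∀ s' ∈ U, ∀ x, |f (act s x) - f (act s' x)| ≤ ε := by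
  set Φ : S → X → ℝ := fun s x => f (act s x) with hΦ
  have hΦc : Continuous Φ := continuous_pi fun x => hf.comp (hactx x)
  have hfrag := frag_lemma (Set.range Φ) (isCompact_range hΦc) (range_nonempty _)
    (by rintro g ⟨s, rfl⟩; exact hf.comp (hacts s)) hε
  obtain ⟨G, hGopen, hGne, hGsmall⟩ := hfrag
  refine ⟨Φ ⁻¹' G, hGopen.preimage hΦc, ?_, ?_⟩
  · obtain ⟨g, ⟨s, rfl⟩, hgG⟩ := hGne
    exact ⟨s, hgG⟩
  · intro s hs s' hs' x
    exact hGsmall _ ⟨mem_range_self s, hs⟩ _ ⟨mem_range_self s', hs'⟩ x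

theorem transfer_lemma [CompactSpace S] [CompactSpace X]
    (opS : S → S → S) (act : S → X → X)
    (hopSl : ∀ s : S, Continuous (opS s)) (hopSr : ∀ t : S, Continuous fun s => opS s t)
    (hacts : ∀ s, Continuous (act s)) (hactx : ∀ x, Continuous fun s => act s x)
    (haction : ∀ s t x, act s (act t x) = act (opS s t) x)
    (T : Set S) (hTs : ∀ t ∈ T, Function.Surjective (opS t) ∧ Function.Surjective (act t))
    (hdense : Dense T) {t : S} (ht : t ∈ T)
    (f : X → ℝ) (hf : Continuous f) {ε : ℝ} (hε : 0 < ε) :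
    ∃ W : Set S, IsOpen W ∧ t ∈ W ∧
      ∀ s ∈ W, ∀ x, |f (act s x) - f (act t x)| ≤ ε := by
  haveI : Nonempty S := ⟨t⟩
  obtain ⟨U, hUopen, hUne, hUsmall⟩ := star_lemma act hacts hactx f hf hε
  have hdense2 : Dense ((opS t) '' T) := by
    have h2 : (univ : Set S) ⊆ closure ((opS t) '' T) := by
      calc (univ : Set S) = (opS t) '' univ := by
            rw [image_univ, (hTs t ht).1.range_eq]
        _ = (opS t) '' (closure T) := by rw [hdense.closure_eq]
        _ ⊆ closure ((opS t) '' T) := image_closure_subset_closure_image (hopSl t)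
    exact dense_iff_closure_eq.mpr (eq_univ_of_univ_subset h2)
  obtain ⟨y, ⟨u, huT, rfl⟩, hyU⟩ := hdense2.exists_mem_open hUopen hUne
  refine ⟨(fun s => opS s u) ⁻¹' U, hUopen.preimage (hopSr u), hyU, ?_⟩
  intro s hs x
  obtain ⟨z, rfl⟩ := (hTs u huT).2 x
  rw [haction s u z, haction t u z]
  exact hUsmall _ hs _ hyU z

end MainAux



open scoped ENNReal
open BoundedContinuousFunction

/-- `ω` is a weight on `(X, mul)`: positive, submultiplicative, and `ω`, `ω⁻¹`
bounded on compact subsets. -/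
def IsWeight {X : Type*} [TopologicalSpace X] (mul : X → X → X) (ω : X → ℝ) : Prop :=
  (∀ x, 0 < ω x) ∧ (∀ x y, ω (mul x y) ≤ ω x * ω y) ∧
  (∀ K : Set X, IsCompact K → ∃ M : ℝ, ∀ x ∈ K, ω x ≤ M) ∧
  (∀ K : Set X, IsCompact K → ∃ m : ℝ, 0 < m ∧ ∀ x ∈ K, m ≤ ω x)

/-- `C(X, ω)`: continuous `f : X → ℝ` with `f/ω` bounded and continuous. -/
def Cw {X : Type*} [TopologicalSpace X] (ω : X → ℝ) : Set (X → ℝ) :=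
  {f | Continuous f ∧ ∃ g : X →ᵇ ℝ, ∀ x, g x = f x / ω x}

/-- The set of weighted left translates `ₛ(f/ω)·ₛΩ`, where
`ₛΩ(x) = Ω(s•e, x) = ω((s•e)x)/(ω(s•e)ω(x))`, realized in `C_b(X)`. -/
def wTrans {S X : Type*} [TopologicalSpace X] (act : S → X → X) (mul : X → X → X)
    (ω : X → ℝ) (e : X) (f : X → ℝ) : Set (X →ᵇ ℝ) :=
  {g | ∃ s : S, ∀ x, g x =
    (f (act s x) / ω (act s x)) * (ω (mul (act s e) x) / (ω (act s e) * ω x))}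

/-- Weighted almost periodic functions: weighted left translates relatively
norm-compact in `C_b(X)`. -/
def APw {S X : Type*} [TopologicalSpace X] (act : S → X → X) (mul : X → X → X)
    (ω : X → ℝ) (e : X) : Set (X → ℝ) :=
  {f | f ∈ Cw ω ∧ IsCompact (closure (wTrans act mul ω e f))}

/-- Weighted weakly almost periodic functions: weighted left translates
relatively compact in the weak topology of `C_b(X)`. -/
def WAPw {S X : Type*} [TopologicalSpace X] (act : S → X → X) (mul : X → X → X)
    (ω : X → ℝ) (e : X) : Set (X → ℝ) :=
  {f | f ∈ Cw ω ∧
    IsCompact (closure ((toWeakSpace ℝ (X →ᵇ ℝ)) '' wTrans act mul ω e f))}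

/-- Weighted left uniformly continuous functions: `s ↦ ₛ(f/ω)·ₛΩ` is norm
continuous from `S` into `C_b(X)`. -/
def LUCw {S X : Type*} [TopologicalSpace S] [TopologicalSpace X] (act : S → X → X)
    (mul : X → X → X) (ω : X → ℝ) (e : X) : Set (X → ℝ) :=
  {f | f ∈ Cw ω ∧ ∃ T : S → (X →ᵇ ℝ), Continuous T ∧ ∀ s x, T s x =
    (f (act s x) / ω (act s x)) * (ω (mul (act s e) x) / (ω (act s e) * ω x))}

/-- Weighted right uniformly continuous functions: `x ↦ (f/ω)(·x)·Ω(·e,x)` is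
norm continuous from `X` into `C_b(S)`. -/
def RUCw {S X : Type*} [TopologicalSpace S] [TopologicalSpace X] (act : S → X → X)
    (mul : X → X → X) (ω : X → ℝ) (e : X) : Set (X → ℝ) :=
  {f | f ∈ Cw ω ∧ ∃ U : X → (S →ᵇ ℝ), Continuous U ∧ ∀ x s, U x s =
    (f (act s x) / ω (act s x)) * (ω (mul (act s e) x) / (ω (act s e) * ω x))}

/-- for `(S,X,ω)` compact Hausdorff semitopological with
`T = {t : tS = S, tX = X}` dense in `S`, the restricted action of `T` on `X`
is jointly continuous, i.e. `(T,X,ω)` is a topological transformation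
semigroup. -/
theorem stmt15 {S X : Type*} [TopologicalSpace S] [TopologicalSpace X]
    [CompactSpace S] [CompactSpace X] [T2Space S] [T2Space X]
    (opS : S → S → S) (act : S → X → X) (mul : X → X → X) (ω : X → ℝ) (e : X)
    (hω : IsWeight mul ω) (hωc : Continuous ω)
    (he : ∀ x, mul e x = x ∧ mul x e = x)
    (hopSl : ∀ s : S, Continuous (opS s)) (hopSr : ∀ t : S, Continuous fun s => opS s t)
    (hacts : ∀ s, Continuous (act s)) (hactx : ∀ x, Continuous fun s => act s x)
    (hmuls : ∀ x : X, Continuous (mul x)) (hmulx : ∀ y : X, Continuous fun x => mul x y)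
    (haction : ∀ s t x, act s (act t x) = act (opS s t) x)
    (T : Set S)
    (hT : T = {t : S | Function.Surjective (opS t) ∧ Function.Surjective (act t)})
    (hdense : Dense T) :
    Continuous fun p : T × X => act (p.1 : S) p.2 := by
  have hTs : ∀ u ∈ T, Function.Surjective (opS u) ∧ Function.Surjective (act u) := by
    intro u hu; rwa [hT] at hu
  rw [continuous_iff_continuousAt]
  rintro ⟨⟨t, ht⟩, x₀⟩
  have hmain : ContinuousAt (fun q : S × X => act q.1 q.2) (t, x₀) := by
    rw [ContinuousAt, Filter.tendsto_def]
    intro V hV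
    obtain ⟨V', hV'sub, hV'open, hV'mem⟩ := mem_nhds_iff.mp hV
    have hdisj : Disjoint V'ᶜ ({act t x₀} : Set X) := by
      rw [Set.disjoint_singleton_right]
      simpa using hV'mem
    obtain ⟨f, hf0, hf1, _⟩ := exists_continuous_zero_one_of_isClosed
      hV'open.isClosed_compl isClosed_singleton hdisj
    obtain ⟨W, hWopen, htW, hWsmall⟩ := transfer_lemma opS act hopSl hopSr hacts hactx haction
      T hTs hdense ht f f.continuous (by norm_num : (0:ℝ) < 1/4)
    set W' : Set X := (fun x => f (act t x)) ⁻¹' Set.Ioi (3/4 : ℝ) with hW'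
    have hW'open : IsOpen W' := isOpen_Ioi.preimage (f.continuous.comp (hacts t))
    have hx₀W' : x₀ ∈ W' := by
      have h1 : f (act t x₀) = 1 := hf1 rfl
      simp only [hW', Set.mem_preimage, Set.mem_Ioi, h1]
      norm_num
    have hsub : W ×ˢ W' ⊆ (fun q : S × X => act q.1 q.2) ⁻¹' V := by
      rintro ⟨s, x⟩ ⟨hsW, hxW'⟩
      apply hV'sub
      by_contra hnot
      have h0 : f (act s x) = 0 := hf0 hnot
      have h1 : |f (act s x) - f (act t x)| ≤ 1/4 := hWsmall s hsW x
      have h2 : (3/4 : ℝ) < f (act t x) := hxW'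
      rw [h0] at h1
      rw [abs_sub_comm, abs_of_pos (by linarith)] at h1
      linarith
    exact Filter.mem_of_superset
      (prod_mem_nhds (hWopen.mem_nhds htW) (hW'open.mem_nhds hx₀W')) hsub
  have hincl : ContinuousAt (fun p : T × X => ((p.1 : S), p.2)) (⟨⟨t, ht⟩, x₀⟩) :=
    (continuous_subtype_val.prodMap continuous_id).continuousAt
  have hcomp : ContinuousAt ((fun q : S × X => act q.1 q.2) ∘
      (fun p : T × X => ((p.1 : S), p.2))) (⟨⟨t, ht⟩, x₀⟩) := ContinuousAt.comp (f := fun p : T × X => ((p.1 : S), p.2)) hmain hincl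
  exact hcomp
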